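/- Let D ≥ 1, k ≥ 1, and let E : Fin D → ℝ satisfy the k-th no-resonance condition. Let U_t be the D×D diagonal matrix with entries exp(−i·E_j·t), and let U_t^{⊗k} denote its k-fold Kronecker power, acting on matrices indexed by tuples Fin k → Fin D. Then for every complex matrix A indexed by (Fin k → Fin D) × (Fin k → Fin D), the limit lim_{T→∞} (1/T) ∫₀^T U_t^{⊗k} A (U_t^{⊗k})^† dt exists, and its (α, β) entry equals A_{α,β} if β is a rearrangement of α (i.e., there exists a permutation σ of Fin k with β = α ∘ σ), and equals 0 otherwise. -/

import Mathlib

open Filter MeasureTheory Matrix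

/-- The `k`-th no-resonance condition for a family of energy levels `E : Fin D → ℝ`. -/
def NoResonance (D k : ℕ) (E : Fin D → ℝ) : Prop :=
  ∀ α β : Fin k → Fin D, (∑ j, E (α j)) = (∑ j, E (β j)) →
    ∃ σ : Equiv.Perm (Fin k), β = α ∘ σ

/-- `k`-th Hamiltonian twirling identity: under the `k`-th no-resonance condition, the
infinite-time average of `Uₜ^{⊗k} A (Uₜ^{⊗k})ᴴ` exists entrywise, and its `(α, β)` entry
equals `A α β` if `β` is a rearrangement of `α`, and `0` otherwise. -/
theorem kth_hamiltonian_twirling_identity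
    (D k : ℕ) (hD : 1 ≤ D) (hk : 1 ≤ k) (E : Fin D → ℝ) (hNR : NoResonance D k E)
    (Uk : ℝ → Matrix (Fin k → Fin D) (Fin k → Fin D) ℂ)
    (hUk : ∀ t, Uk t = Matrix.diagonal
      fun α : Fin k → Fin D => ∏ j, Complex.exp (-(Complex.I * (E (α j) : ℂ) * (t : ℂ))))
    (A : Matrix (Fin k → Fin D) (Fin k → Fin D) ℂ) :
    ∀ α β : Fin k → Fin D,
      Tendsto
        (fun T : ℝ => (1 / T : ℂ) *
          ∫ t in (0:ℝ)..T, ((Uk t) * A * (Uk t)ᴴ) α β)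
        atTop
        (nhds (if ∃ σ : Equiv.Perm (Fin k), β = α ∘ σ then A α β else 0)) := by
  intro α β
  set Sα : ℝ := ∑ j, E (α j) with hSα
  set Sβ : ℝ := ∑ j, E (β j) with hSβ
  set c : ℂ := Complex.I * ((Sβ : ℂ) - (Sα : ℂ)) with hc
  have h1 : ∀ t : ℝ, ∀ γ : Fin k → Fin D,
      (∏ j, Complex.exp (-(Complex.I * (E (γ j) : ℂ) * (t : ℂ))))
        = Complex.exp (-(Complex.I * ((∑ j, E (γ j) : ℝ) : ℂ) * t)) := by
    intro t γ
    rw [← Complex.exp_sum]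
    congr 1
    push_cast
    rw [Finset.sum_neg_distrib]
    congr 1
    rw [Finset.mul_sum, Finset.sum_mul]
  have hentry : ∀ t : ℝ, ((Uk t) * A * (Uk t)ᴴ) α β = Complex.exp (c * t) * A α β := by
    intro t
    rw [hUk t, Matrix.diagonal_conjTranspose, Matrix.mul_diagonal, Matrix.diagonal_mul]
    simp only [Pi.star_apply, h1 t α, h1 t β]
    rw [Complex.star_def, ← Complex.exp_conj]
    have hconj : (starRingEnd ℂ) (-(Complex.I * ((Sβ : ℝ) : ℂ) * t)) =
        Complex.I * (Sβ : ℂ) * t := by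
      rw [map_neg, _root_.map_mul, _root_.map_mul, Complex.conj_I, Complex.conj_ofReal,
        Complex.conj_ofReal]
      ring
    rw [hconj, mul_right_comm, ← Complex.exp_add]
    congr 2
    rw [hc, hSα]; push_cast; ring
  by_cases hperm : ∃ σ : Equiv.Perm (Fin k), β = α ∘ σ
  · rw [if_pos hperm]
    have hS : Sα = Sβ := by
      obtain ⟨σ, hσ⟩ := hperm
      rw [hSα, hSβ, hσ]
      exact (Equiv.sum_comp σ (fun j => E (α j))).symm
    have hc0 : c = 0 := by rw [hc, hS]; ring
    have hev : ∀ᶠ T : ℝ in atTop, (1 / (T:ℂ)) * ∫ t in (0:ℝ)..T, ((Uk t) * A * (Uk t)ᴴ) α β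
        = A α β := by
      filter_upwards [eventually_gt_atTop (0:ℝ)] with T hT
      have hca : ∀ t : ℝ, ((Uk t) * A * (Uk t)ᴴ) α β = A α β := by
        intro t; rw [hentry t, hc0]; simp
      simp only [hca, intervalIntegral.integral_const, sub_zero, Complex.real_smul]
      have hT' : (T : ℂ) ≠ 0 := by exact_mod_cast hT.ne'
      field_simp
    exact Tendsto.congr' (hev.mono fun T h => h.symm) tendsto_const_nhds
  · rw [if_neg hperm]
    have hS : Sα ≠ Sβ := fun h => hperm (hNR α β h)
    have hc0 : c ≠ 0 := by
      rw [hc]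
      exact mul_ne_zero Complex.I_ne_zero (sub_ne_zero.mpr (by exact_mod_cast hS.symm))
    have hint : ∀ T : ℝ, (∫ t in (0:ℝ)..T, ((Uk t) * A * (Uk t)ᴴ) α β)
        = (Complex.exp (c * T) - 1) / c * A α β := by
      intro T
      simp only [hentry]
      rw [intervalIntegral.integral_mul_const, integral_exp_mul_complex hc0]
      simp
    have hnorm : ∀ T : ℝ, ‖Complex.exp (c * T) - 1‖ ≤ 2 := by
      intro T
      have he : ‖Complex.exp (c * T)‖ = 1 := by
        rw [Complex.norm_exp]
        have : (c * T).re = 0 := by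
          simp [hc, Complex.mul_re, Complex.mul_im]
        rw [this, Real.exp_zero]
      calc ‖Complex.exp (c * T) - 1‖ ≤ ‖Complex.exp (c * T)‖ + ‖(1:ℂ)‖ := norm_sub_le _ _
        _ ≤ 2 := by rw [he]; norm_num
    have hbound : ∀ᶠ T : ℝ in atTop,
        ‖(1 / (T:ℂ)) * ∫ t in (0:ℝ)..T, ((Uk t) * A * (Uk t)ᴴ) α β‖
          ≤ (2 / ‖c‖ * ‖A α β‖) * T⁻¹ := by
      filter_upwards [eventually_gt_atTop (0:ℝ)] with T hT
      rw [hint T, norm_mul, norm_mul, norm_div, norm_div]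
      have h2 : ‖(T:ℂ)‖ = T := by rw [Complex.norm_real, Real.norm_of_nonneg hT.le]
      rw [norm_one, h2]
      calc 1 / T * (‖Complex.exp (c * T) - 1‖ / ‖c‖ * ‖A α β‖)
          ≤ 1 / T * (2 / ‖c‖ * ‖A α β‖) := by
            apply mul_le_mul_of_nonneg_left _ (by positivity)
            apply mul_le_mul_of_nonneg_right _ (norm_nonneg _)
            exact div_le_div_of_nonneg_right (hnorm T) (norm_nonneg c)
        _ = (2 / ‖c‖ * ‖A α β‖) * T⁻¹ := by ring
    have hg : Tendsto (fun T : ℝ => (2 / ‖c‖ * ‖A α β‖) * T⁻¹) atTop (nhds 0) := by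
      simpa using tendsto_inv_atTop_zero.const_mul (2 / ‖c‖ * ‖A α β‖)
    exact squeeze_zero_norm' hbound hg
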